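/- Let G be a magmal comonad on a magmal category C. Let (Y,υ) and (Z,ζ) be G-coalgebras, and suppose the internal homs (cloaks) [(Y,υ), (GZ, δ_Z)] and [(Y,υ), (G²Z, δ_{GZ})] exist in C^G. Then the cloak [(Y,υ),(Z,ζ)] exists if and only if the parallel pair [1, δ_Z], [1, Gζ] : [(Y,υ),(GZ,δ_Z)] → [(Y,υ),(G²Z,δ_{GZ})] has an equalizer in C^G, and in that case the equalizer is the cloak [(Y,υ),(Z,ζ)]. -/

import Mathlib

open CategoryTheory

namespace WoodStmt3

variable {C : Type*} [Category C]

/-- A magmal comonad: a comonad `G` on a magmal category `(C, T)` together with a natural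
family `G₂ : G X ⊗ G Y ⟶ G (X ⊗ Y)` for which `ε` and `δ` are magmal. -/
structure MagmalComonad (T : C ⥤ C ⥤ C) (G : Comonad C) where
  g2 : ∀ X Y : C, (T.obj (G.obj X)).obj (G.obj Y) ⟶ G.obj ((T.obj X).obj Y)
  natl : ∀ {X X' : C} (Y : C) (f : X ⟶ X'),
    (T.map (G.map f)).app (G.obj Y) ≫ g2 X' Y = g2 X Y ≫ G.map ((T.map f).app Y)
  natr : ∀ (X : C) {Y Y' : C} (g : Y ⟶ Y'),
    (T.obj (G.obj X)).map (G.map g) ≫ g2 X Y' = g2 X Y ≫ G.map ((T.obj X).map g)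
  counit_comp : ∀ X Y : C, g2 X Y ≫ G.ε.app ((T.obj X).obj Y) =
    (T.map (G.ε.app X)).app (G.obj Y) ≫ (T.obj X).map (G.ε.app Y)
  delta_comp : ∀ X Y : C, g2 X Y ≫ G.δ.app ((T.obj X).obj Y) =
    (T.map (G.δ.app X)).app (G.obj Y) ≫ (T.obj (G.obj (G.obj X))).map (G.δ.app Y)
      ≫ g2 (G.obj X) (G.obj Y) ≫ G.map (g2 X Y)

/-- The coaction `G₂ ∘ (ξ ⊗ υ)` on the tensor of the underlying objects. -/
def coact {T : C ⥤ C ⥤ C} {G : Comonad C} (M : MagmalComonad T G)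
    (A B : G.Coalgebra) :
    (T.obj A.A).obj B.A ⟶ G.obj ((T.obj A.A).obj B.A) :=
  (T.map A.a).app B.A ≫ (T.obj (G.obj A.A)).map B.a ≫ M.g2 A.A B.A

/-- `(E, ev)` is a left cloak of `Z` by `Y` for a tensor `T` on any category. -/
def IsCloak {D : Type*} [Category D] (T : D ⥤ D ⥤ D) (Y Z E : D)
    (ev : (T.obj E).obj Y ⟶ Z) : Prop :=
  ∀ (X : D) (f : (T.obj X).obj Y ⟶ Z), ∃! g : X ⟶ E, (T.map g).app Y ≫ ev = f

variable (G : Comonad C)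

/-- `δ_Z` as a coalgebra morphism `(GZ, δ_Z) ⟶ (G²Z, δ_{GZ})`. -/
def deltaMor (Z : C) : G.cofree.obj Z ⟶ G.cofree.obj (G.obj Z) :=
  { f := G.δ.app Z
    h := by first | exact G.coassoc Z | exact (G.coassoc Z).symm | simp [Comonad.coassoc] }

/-- The coaction `ζ` as a coalgebra morphism `(Z, ζ) ⟶ (GZ, δ_Z)`. -/
def coactMor (B : G.Coalgebra) : B ⟶ G.cofree.obj B.A :=
  { f := B.a, h := B.coassoc.symm }

lemma exists_factor (B W : G.Coalgebra) (h : W ⟶ G.cofree.obj B.A)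
    (hw : h ≫ deltaMor G B.A = h ≫ G.cofree.map B.a) :
    ∃! k : W ⟶ B, k ≫ coactMor G B = h := by
  have hwf : h.f ≫ G.δ.app B.A = h.f ≫ G.toFunctor.map B.a := by
    have := congrArg Comonad.Coalgebra.Hom.f hw
    simp [deltaMor, Comonad.Coalgebra.comp_f] at this
    exact this
  have key : h.f ≫ G.ε.app B.A ≫ B.a = h.f := by
    have nat : G.toFunctor.map B.a ≫ G.ε.app (G.obj B.A) = G.ε.app B.A ≫ B.a :=
      G.ε.naturality B.a
    erw [← nat, ← Category.assoc, ← hwf]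
    exact (Category.assoc _ _ _).trans ((congrArg (h.f ≫ ·) (G.left_counit B.A)).trans
      (Category.comp_id _))
  refine ⟨⟨h.f ≫ G.ε.app B.A, ?_⟩, ?_, ?_⟩
  · have hh : W.a ≫ G.toFunctor.map h.f = h.f ≫ G.δ.app B.A := by
      exact h.h
    erw [Functor.map_comp, ← Category.assoc, hh]
    refine (Category.assoc _ _ _).trans ((congrArg (h.f ≫ ·) (G.right_counit B.A)).trans
      ((Category.comp_id _).trans ?_))
    exact ((Category.assoc _ _ _).trans key).symm
  · apply Comonad.Coalgebra.Hom.ext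
    exact (Category.assoc _ _ _).trans key
  · intro k hk
    apply Comonad.Coalgebra.Hom.ext
    have hk' : k.f ≫ B.a = h.f := by
      have := congrArg Comonad.Coalgebra.Hom.f hk
      simp [coactMor, Comonad.Coalgebra.comp_f] at this
      exact this
    have : k.f ≫ B.a ≫ G.ε.app B.A = h.f ≫ G.ε.app B.A := by
      erw [← Category.assoc, hk']; rfl
    simpa [B.counit] using this

lemma coact_mono (B : G.Coalgebra) {W : G.Coalgebra} (k k' : W ⟶ B)
    (h : k ≫ coactMor G B = k' ≫ coactMor G B) : k = k' := by
  apply Comonad.Coalgebra.Hom.ext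
  have h' : k.f ≫ B.a = k'.f ≫ B.a := by
    have := congrArg Comonad.Coalgebra.Hom.f h
    simp [coactMor, Comonad.Coalgebra.comp_f] at this
    exact this
  have := congrArg (· ≫ G.ε.app B.A) h'
  simpa [B.counit] using this

/-- Let `G` be a magmal comonad on a magmal category `(C, T)`, and let
`(Y,υ)`, `(Z,ζ)` be `G`-coalgebras.  Suppose the cloaks `[(Y,υ),(GZ,δ_Z)]` and
`[(Y,υ),(G²Z,δ_{GZ})]` exist in `C^G` (with its canonical tensor `Tbar`).  Then the
cloak `[(Y,υ),(Z,ζ)]` exists iff the parallel pair `[1,δ_Z], [1,Gζ]` between them has an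
equalizer in `C^G`; in that case the equalizer is the cloak, with evaluation determined
by the compatibility square with `ζ`. -/
theorem cloak_iff_equalizer (T : C ⥤ C ⥤ C) (M : MagmalComonad T G)
    (Tbar : G.Coalgebra ⥤ G.Coalgebra ⥤ G.Coalgebra)
    (hobj : ∀ A B : G.Coalgebra, ((Tbar.obj A).obj B).A = (T.obj A.A).obj B.A)
    (hcoact : ∀ A B : G.Coalgebra, ((Tbar.obj A).obj B).a =
      eqToHom (hobj A B) ≫ coact M A B ≫ G.map (eqToHom (hobj A B).symm))
    (hmap : ∀ {A A' B B' : G.Coalgebra} (f : A ⟶ A') (g : B ⟶ B'),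
      ((Tbar.map f).app B ≫ (Tbar.obj A').map g).f =
        eqToHom (hobj A B) ≫ (T.map f.f).app B.A ≫ (T.obj A'.A).map g.f ≫
          eqToHom (hobj A' B').symm)
    (A B : G.Coalgebra)
    -- the cloak `[(Y,υ), (GZ, δ_Z)]`
    (E1 : G.Coalgebra) (ev1 : (Tbar.obj E1).obj A ⟶ G.cofree.obj B.A)
    (h1 : IsCloak Tbar A (G.cofree.obj B.A) E1 ev1)
    -- the cloak `[(Y,υ), (G²Z, δ_{GZ})]`
    (E2 : G.Coalgebra) (ev2 : (Tbar.obj E2).obj A ⟶ G.cofree.obj (G.obj B.A))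
    (h2 : IsCloak Tbar A (G.cofree.obj (G.obj B.A)) E2 ev2)
    -- the induced parallel pair `[1, δ_Z], [1, Gζ] : E1 ⟶ E2`
    (l1 l2 : E1 ⟶ E2)
    (hl1 : (Tbar.map l1).app A ≫ ev2 = ev1 ≫ deltaMor G B.A)
    (hl2 : (Tbar.map l2).app A ≫ ev2 = ev1 ≫ G.cofree.map B.a) :
    ((∃ (E : G.Coalgebra) (ev : (Tbar.obj E).obj A ⟶ B), IsCloak Tbar A B E ev) ↔
      Limits.HasEqualizer l1 l2) ∧
    (∀ (c : Limits.Fork l1 l2), Limits.IsLimit c →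
      ∃ ev : (Tbar.obj c.pt).obj A ⟶ B,
        IsCloak Tbar A B c.pt ev ∧
        (Tbar.map c.ι).app A ≫ ev1 = ev ≫ coactMor G B) := by
  clear M hobj hcoact hmap
  have comp_app : ∀ {X Y Z : G.Coalgebra} (a : X ⟶ Y) (b : Y ⟶ Z),
      (Tbar.map (a ≫ b)).app A = (Tbar.map a).app A ≫ (Tbar.map b).app A := by
    intro X Y Z a b; rw [Tbar.map_comp]; rfl
  have coact_eq : coactMor G B ≫ deltaMor G B.A = coactMor G B ≫ G.cofree.map B.a := by
    apply Comonad.Coalgebra.Hom.ext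
    simp only [coactMor, deltaMor, Comonad.Coalgebra.comp_f, Comonad.cofree_map_f]
    exact B.coassoc
  -- forward: equalizing maps into E1 induce maps X⊗A ⟶ B
  have fw : ∀ (X : G.Coalgebra) (g : X ⟶ E1), g ≫ l1 = g ≫ l2 →
      ∃! k : (Tbar.obj X).obj A ⟶ B, k ≫ coactMor G B = (Tbar.map g).app A ≫ ev1 := by
    intro X g hg
    apply exists_factor
    rw [Category.assoc, Category.assoc, hl1.symm, hl2.symm,
      ← Category.assoc, ← Category.assoc, ← comp_app, ← comp_app, hg]
  -- backward: maps X⊗A ⟶ B induce equalizing maps into E1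
  have bw : ∀ (X : G.Coalgebra) (f : (Tbar.obj X).obj A ⟶ B),
      ∃ g : X ⟶ E1, (Tbar.map g).app A ≫ ev1 = f ≫ coactMor G B ∧ g ≫ l1 = g ≫ l2 := by
    intro X f
    obtain ⟨g, hg, -⟩ := h1 X (f ≫ coactMor G B)
    refine ⟨g, hg, ?_⟩
    obtain ⟨u, -, uniq⟩ := h2 X (f ≫ coactMor G B ≫ deltaMor G B.A)
    have q1 : (Tbar.map (g ≫ l1)).app A ≫ ev2 = f ≫ coactMor G B ≫ deltaMor G B.A := by
      rw [comp_app, Category.assoc, hl1, ← Category.assoc, hg, Category.assoc]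
    have q2 : (Tbar.map (g ≫ l2)).app A ≫ ev2 = f ≫ coactMor G B ≫ deltaMor G B.A := by
      rw [comp_app, Category.assoc, hl2, ← Category.assoc, hg, Category.assoc,
        ← coact_eq]
    rw [uniq _ q1, uniq _ q2]
  -- the second clause (and the ← direction of the iff)
  have part2 : ∀ (c : Limits.Fork l1 l2), Limits.IsLimit c →
      ∃ ev : (Tbar.obj c.pt).obj A ⟶ B,
        IsCloak Tbar A B c.pt ev ∧
        (Tbar.map c.ι).app A ≫ ev1 = ev ≫ coactMor G B := by
    intro c hc
    obtain ⟨ev, hev, -⟩ := fw c.pt c.ι c.condition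
    refine ⟨ev, ?_, hev.symm⟩
    intro X f
    obtain ⟨g, hg, hgl⟩ := bw X f
    obtain ⟨u, hu⟩ := Limits.Fork.IsLimit.lift' hc g hgl
    refine ⟨u, ?_, ?_⟩
    · apply coact_mono
      rw [Category.assoc, hev, ← Category.assoc, ← comp_app, hu, hg]
    · intro m hm
      apply Limits.Fork.IsLimit.hom_ext hc
      obtain ⟨g', hg', ug'⟩ := h1 X (f ≫ coactMor G B)
      have e1 : m ≫ c.ι = g' := by
        apply ug'
        rw [comp_app, Category.assoc, ← hev, ← Category.assoc, hm]
      have e2 : u ≫ c.ι = g' := by rw [hu]; exact ug' _ hg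
      rw [e1, e2]
  refine ⟨⟨?_, ?_⟩, part2⟩
  · rintro ⟨E, ev, hE⟩
    obtain ⟨ι, hι, hιl⟩ := bw E ev
    refine ⟨⟨⟨Limits.Fork.ofι ι hιl, Limits.Fork.IsLimit.mk' _ ?_⟩⟩⟩
    intro s
    have hfw := fw s.pt s.ι s.condition
    set k := hfw.choose with hkdef
    have hk : k ≫ coactMor G B = (Tbar.map s.ι).app A ≫ ev1 := hfw.choose_spec.1
    have hhE := hE s.pt k
    set u := hhE.choose with hudef
    have hu : (Tbar.map u).app A ≫ ev = k := hhE.choose_spec.1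
    have uu : ∀ y, (Tbar.map y).app A ≫ ev = k → y = u := hhE.choose_spec.2
    refine ⟨u, ?_, ?_⟩
    · show u ≫ ι = s.ι
      obtain ⟨g', hg', ug'⟩ := h1 s.pt (k ≫ coactMor G B)
      have e1 : u ≫ ι = g' := by
        apply ug'
        rw [comp_app, Category.assoc, hι, ← Category.assoc, hu]
      have e2 : s.ι = g' := ug' _ hk.symm
      rw [e1, e2]
    · intro m hm
      have hm' : m ≫ ι = s.ι := by simpa using hm
      apply uu
      apply coact_mono
      rw [Category.assoc, ← hι, ← Category.assoc, ← comp_app, hm']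
      exact hk.symm
  · intro hEq
    obtain ⟨ev, hcl, -⟩ :=
      part2 (Limits.limit.cone (Limits.parallelPair l1 l2))
        (Limits.limit.isLimit (Limits.parallelPair l1 l2))
    exact ⟨_, ev, hcl⟩

end WoodStmt3
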